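/- Correctness of the simplification procedure: for every list a of length L ≥ 1 with entries in {1,…,M}, every internal (non-leaf) node of the canonical decoded forest decode(s(a)) of the simplified list s(a) has at least two children. (Thus the simplification of Section 5.1 always produces an organization with no redundant single-subordinate aggregator nodes.) -/

import Mathlib

/-- A rooted plane tree: a node carrying a finite ordered list of child subtrees.
A node with no children is a leaf. -/
inductive PTree : Type where
  | node : List PTree → PTree

namespace PTree

mutual
/-- Number of leaves of a plane tree. -/
def leaves : PTree → ℕ
  | .node [] => 1
  | .node (c :: cs) => c.leaves + leavesList cs

/-- Total number of leaves of a list of plane trees. -/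
def leavesList : List PTree → ℕ
  | [] => 0
  | c :: cs => c.leaves + leavesList cs
end

mutual
/-- Height of a plane tree (a single leaf has height 1). -/
def height : PTree → ℕ
  | .node [] => 1
  | .node (c :: cs) => 1 + max c.height (heightList cs)

/-- Maximum height among a list of plane trees (0 for the empty list). -/
def heightList : List PTree → ℕ
  | [] => 0
  | c :: cs => max c.height (heightList cs)
end

mutual
/-- Separation levels between consecutive leaves inside a tree whose root is at level `l`:
between two consecutive leaves lying in distinct children we record `l+1`
(one more than the level of their lowest common ancestor, which is the root). -/
def enc : PTree → ℕ → List ℕ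
  | .node [], _ => []
  | .node (c :: cs), l => c.enc (l + 1) ++ encList cs (l + 1)

/-- Separation levels for a list of sibling subtrees all at level `l`, including
the separator `l` between consecutive subtrees. -/
def encList : List PTree → ℕ → List ℕ
  | [], _ => []
  | c :: cs, l => (l :: c.enc l) ++ encList cs l
end

end PTree

/-- Total number of leaves of a plane forest. -/
def forestLeaves (F : List PTree) : ℕ := PTree.leavesList F

/-- Height of a plane forest: the maximum level of any of its nodes (roots are at level 1). -/
def forestHeight (F : List PTree) : ℕ := PTree.heightList F

/-- The separation array of a plane forest: for each pair of consecutive leaves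
(numbered left to right), the level at which they separate (`1` if they lie in
different trees, and `1 +` the level of their lowest common ancestor otherwise). -/
def forestSep : List PTree → List ℕ
  | [] => []
  | t :: ts => t.enc 1 ++ PTree.encList ts 1

/-- Maximum entry of a list of naturals (`0` for the empty list). -/
def listMax (a : List ℕ) : ℕ := a.foldr max 0

/-- Split a list at the positions of entries equal to `v`, producing the list of the
(possibly empty) segments delimited by those entries; a list containing `k` occurrences
of `v` yields `k + 1` segments, in left-to-right order. -/
def splitSep (v : ℕ) : List ℕ → List (List ℕ)
  | [] => [[]]
  | x :: xs =>
    match splitSep v xs with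
    | [] => [[]]
    | r :: rs => if x = v then [] :: r :: rs else (x :: r) :: rs

theorem splitSep_ne_nil (v : ℕ) (s : List ℕ) : splitSep v s ≠ [] := by
  cases s with
  | nil => simp [splitSep]
  | cons x xs =>
    simp only [splitSep]
    cases h : splitSep v xs with
    | nil => simp
    | cons r rs => by_cases hxv : x = v <;> simp [hxv]

theorem listMax_le_of_mem_splitSep {v : ℕ} {s s' : List ℕ} (h : s' ∈ splitSep v s) :
    listMax s' ≤ listMax s := by
  induction s generalizing s' with
  | nil =>
    simp only [splitSep, List.mem_singleton] at h
    subst h; exact le_rfl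
  | cons x xs ih =>
    simp only [splitSep] at h
    cases hs : splitSep v xs with
    | nil => exact absurd hs (splitSep_ne_nil v xs)
    | cons r rs =>
      rw [hs] at h
      have hr : r ∈ splitSep v xs := by rw [hs]; exact List.mem_cons_self
      by_cases hxv : x = v
      · simp only [if_pos hxv, List.mem_cons] at h
        rcases h with h | h | h
        · subst h; simp [listMax]
        · subst h
          exact le_trans (ih hr) (by simp [listMax, le_max_iff, le_refl, or_true])
        · have : s' ∈ splitSep v xs := by rw [hs]; exact List.mem_cons_of_mem _ h
          exact le_trans (ih this) (by simp [listMax, le_max_iff, le_refl, or_true])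
      · simp only [if_neg hxv, List.mem_cons] at h
        rcases h with h | h
        · subst h
          have := ih hr
          simp only [listMax, List.foldr] at *
          omega
        · have : s' ∈ splitSep v xs := by rw [hs]; exact List.mem_cons_of_mem _ h
          have := ih this
          simp only [listMax, List.foldr] at *
          omega

/-- The canonical decoding `T(s, l)` of a list `s` (all of whose entries are intended to
be strictly greater than `l`) into a plane tree rooted at level `l`: the empty list
decodes to a single leaf, and otherwise the children are obtained by decoding, at level
`l + 1`, the segments of `s` delimited by the entries equal to `l + 1`. -/
def decodeT (s : List ℕ) (l : ℕ) : PTree :=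
  if h : s = [] ∨ listMax s ≤ l then .node []
  else .node ((splitSep (l + 1) s).attach.map (fun x => decodeT x.1 (l + 1)))
termination_by listMax s + 1 - l
decreasing_by
  have h1 : listMax x.1 ≤ listMax s := listMax_le_of_mem_splitSep x.2
  push_neg at h
  omega

/-- The canonical decoded forest of a list `a`: decode, as trees rooted at level `1`,
the segments of `a` delimited by the entries equal to `1`. -/
def decode (a : List ℕ) : List PTree := (splitSep 1 a).map (fun s => decodeT s 1)

mutual
/-- A plane tree is *simplified* if every internal (non-leaf) node has at least two
children. -/
def PTree.Simplified : PTree → Prop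
  | .node [] => True
  | .node (c :: cs) => cs ≠ [] ∧ c.Simplified ∧ SimplifiedList cs

/-- Every tree in the list is simplified. -/
def SimplifiedList : List PTree → Prop
  | [] => True
  | c :: cs => c.Simplified ∧ SimplifiedList cs
end

/-- A plane forest is *simplified* if every internal (non-leaf) node of every one of its
trees has at least two children. -/
def forestSimplified (F : List PTree) : Prop := SimplifiedList F

/-- Minimum entry of a nonempty list of naturals (`0` for the empty list). -/
def listMin : List ℕ → ℕ
  | [] => 0
  | x :: xs => xs.foldr min x

/-- One pass of the simplification procedure at level `l`: within every maximal nonempty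
block of consecutive entries that are all strictly greater than `l` (delimited by entries
`≤ l` or by the ends of the list), replace every entry equal to the minimum of that block
by `l + 1`. -/
def stepSimp (l : ℕ) : List ℕ → List ℕ
  | [] => []
  | x :: xs =>
    if x ≤ l then x :: stepSimp l xs
    else
      (((x :: xs).takeWhile (fun y => decide (l < y))).map
          (fun y =>
            if y = listMin ((x :: xs).takeWhile (fun y => decide (l < y))) then l + 1
            else y)) ++
        stepSimp l ((x :: xs).dropWhile (fun y => decide (l < y)))
termination_by a => a.length
decreasing_by
  · simp
  · have h1 : ((x :: xs).dropWhile (fun y => decide (l < y))).length ≤ xs.length := by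
      rw [List.dropWhile_cons]
      simp only [decide_eq_true_eq]
      split
      · exact (List.dropWhile_sublist _).length_le
      · omega
    simp only [List.length_cons]
    omega

/-- The simplification `s(a)` of a list `a` with entries in `{1,…,M}`: perform the
level-`l` simplification pass for `l = 1, 2, …, M - 1` in increasing order. -/
def simplify (M : ℕ) (a : List ℕ) : List ℕ :=
  (List.range (M - 1)).foldl (fun b l => stepSimp (l + 1) b) a

section AuxLemmas

open List

/-! ### listMin / listMax basics -/

lemma listMin_cons_cons (x y : ℕ) (ys : List ℕ) :
    listMin (x :: y :: ys) = min y (listMin (x :: ys)) := rfl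

lemma listMin_mem : ∀ (xs : List ℕ) (x : ℕ), listMin (x :: xs) ∈ x :: xs := by
  intro xs
  induction xs with
  | nil => intro x; simp [listMin]
  | cons y ys ih =>
    intro x
    rw [listMin_cons_cons]
    rcases le_total y (listMin (x :: ys)) with h | h
    · rw [min_eq_left h]; simp
    · rw [min_eq_right h]
      rcases List.mem_cons.mp (ih x) with h' | h'
      · rw [h']; simp
      · exact List.mem_cons_of_mem _ (List.mem_cons_of_mem _ h')

lemma listMin_le : ∀ (xs : List ℕ) (x : ℕ) {z : ℕ}, z ∈ x :: xs → listMin (x :: xs) ≤ z := by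
  intro xs
  induction xs with
  | nil =>
    intro x z hz
    simp only [List.mem_singleton] at hz
    subst hz
    simp [listMin]
  | cons y ys ih =>
    intro x z hz
    rw [listMin_cons_cons]
    rcases List.mem_cons.mp hz with h | h
    · subst h
      exact le_trans (min_le_right _ _) (ih _ (List.mem_cons_self))
    · rcases List.mem_cons.mp h with h' | h'
      · subst h'; exact min_le_left _ _
      · exact le_trans (min_le_right _ _) (ih x (List.mem_cons_of_mem _ h'))

lemma listMin_eq {s : List ℕ} {m : ℕ} (hm : m ∈ s) (h : ∀ x ∈ s, m ≤ x) :
    listMin s = m := by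
  cases s with
  | nil => simp at hm
  | cons x xs =>
    exact le_antisymm (listMin_le xs x hm) (h _ (listMin_mem xs x))

lemma le_listMax : ∀ {s : List ℕ} {x : ℕ}, x ∈ s → x ≤ listMax s := by
  intro s
  induction s with
  | nil => intro x hx; simp at hx
  | cons y ys ih =>
    intro x hx
    rcases List.mem_cons.mp hx with h | h
    · subst h; exact le_max_left _ _
    · exact le_trans (ih h) (le_max_right _ _)

/-! ### splitSep and joinSep -/

lemma splitSep_cons_eq {v : ℕ} (x : ℕ) {xs r : List ℕ} {rs : List (List ℕ)}
    (hs : splitSep v xs = r :: rs) :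
    splitSep v (x :: xs) = if x = v then [] :: r :: rs else (x :: r) :: rs := by
  simp only [splitSep, hs]


def joinSep (v : ℕ) : List (List ℕ) → List ℕ
  | [] => []
  | [t] => t
  | t :: ts => t ++ v :: joinSep v ts

lemma joinSep_cons_cons (v : ℕ) (t r : List ℕ) (rs : List (List ℕ)) :
    joinSep v (t :: r :: rs) = t ++ v :: joinSep v (r :: rs) := rfl

lemma joinSep_splitSep (v : ℕ) : ∀ (s : List ℕ), joinSep v (splitSep v s) = s := by
  intro s
  induction s with
  | nil => simp [splitSep, joinSep]
  | cons x xs ih =>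
    cases hs : splitSep v xs with
    | nil => exact absurd hs (splitSep_ne_nil v xs)
    | cons r rs =>
      rw [hs] at ih
      rw [splitSep_cons_eq x hs]
      by_cases hxv : x = v
      · rw [if_pos hxv, joinSep_cons_cons, ih, hxv]; rfl
      · rw [if_neg hxv]
        cases rs with
        | nil => simpa [joinSep] using ih
        | cons r' rs' =>
          rw [joinSep_cons_cons] at ih ⊢
          rw [List.cons_append, ih]

lemma mem_joinSep {v : ℕ} {x : ℕ} : ∀ {ts : List (List ℕ)} {t : List ℕ},
    t ∈ ts → x ∈ t → x ∈ joinSep v ts := by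
  intro ts
  induction ts with
  | nil => intro t ht; simp at ht
  | cons u us ih =>
    intro t ht hx
    cases us with
    | nil =>
      simp only [List.mem_singleton] at ht
      subst ht; simpa [joinSep] using hx
    | cons u' us' =>
      rw [joinSep_cons_cons]
      rcases List.mem_cons.mp ht with h | h
      · subst h; exact List.mem_append_left _ hx
      · exact List.mem_append_right _ (List.mem_cons_of_mem _ (ih h hx))

lemma mem_of_mem_splitSep {v : ℕ} {s t : List ℕ} (ht : t ∈ splitSep v s) {x : ℕ}
    (hx : x ∈ t) : x ∈ s := by
  rw [← joinSep_splitSep v s]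
  exact mem_joinSep ht hx

lemma not_mem_of_mem_splitSep {v : ℕ} : ∀ {s t : List ℕ}, t ∈ splitSep v s → v ∉ t := by
  intro s
  induction s with
  | nil => intro t ht; simp [splitSep] at ht; simp [ht]
  | cons x xs ih =>
    intro t ht
    cases hs : splitSep v xs with
    | nil => exact absurd hs (splitSep_ne_nil v xs)
    | cons r rs =>
      rw [splitSep_cons_eq x hs] at ht
      have hr : r ∈ splitSep v xs := by rw [hs]; exact List.mem_cons_self
      by_cases hxv : x = v
      · rw [if_pos hxv] at ht
        rcases List.mem_cons.mp ht with h | h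
        · subst h; simp
        · exact ih (by rw [hs]; exact h)
      · rw [if_neg hxv] at ht
        rcases List.mem_cons.mp ht with h | h
        · subst h
          intro hv
          rcases List.mem_cons.mp hv with h' | h'
          · exact hxv h'.symm
          · exact ih hr h'
        · exact ih (by rw [hs]; exact List.mem_cons_of_mem _ h)

lemma two_le_splitSep_length {v : ℕ} : ∀ {s : List ℕ}, v ∈ s → 2 ≤ (splitSep v s).length := by
  intro s
  induction s with
  | nil => intro h; simp at h
  | cons x xs ih =>
    intro h
    cases hs : splitSep v xs with
    | nil => exact absurd hs (splitSep_ne_nil v xs)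
    | cons r rs =>
      rw [splitSep_cons_eq x hs]
      by_cases hxv : x = v
      · rw [if_pos hxv]; simp
      · rw [if_neg hxv]
        have hv : v ∈ xs := by
          rcases List.mem_cons.mp h with h' | h'
          · exact absurd h'.symm hxv
          · exact h'
        have := ih hv
        rw [hs] at this
        simpa using this

/-! ### blocks -/

def blocks (l : ℕ) : List ℕ → List (List ℕ)
  | [] => []
  | x :: xs =>
    if x ≤ l then blocks l xs
    else ((x :: xs).takeWhile (fun y => decide (l < y))) ::
      blocks l ((x :: xs).dropWhile (fun y => decide (l < y)))
termination_by a => a.length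
decreasing_by
  · simp
  · have h1 : ((x :: xs).dropWhile (fun y => decide (l < y))).length ≤ xs.length := by
      rw [List.dropWhile_cons]
      simp only [decide_eq_true_eq]
      split
      · exact (List.dropWhile_sublist _).length_le
      · omega
    simp only [List.length_cons]
    omega

lemma blocks_nil (l : ℕ) : blocks l [] = [] := by rw [blocks]

lemma blocks_cons_le {l x : ℕ} (hx : x ≤ l) (xs : List ℕ) :
    blocks l (x :: xs) = blocks l xs := by rw [blocks, if_pos hx]

lemma blocks_cons_gt {l x : ℕ} (hx : l < x) (xs : List ℕ) :
    blocks l (x :: xs) = ((x :: xs).takeWhile (fun y => decide (l < y))) ::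
      blocks l ((x :: xs).dropWhile (fun y => decide (l < y))) := by
  rw [blocks, if_neg (by omega)]

lemma takeWhile_dropWhile_append_neg {p : ℕ → Bool} {c : ℕ} (hc : p c = false) :
    ∀ (u w : List ℕ), (u ++ c :: w).takeWhile p = u.takeWhile p ∧
      (u ++ c :: w).dropWhile p = u.dropWhile p ++ c :: w := by
  intro u
  induction u with
  | nil => intro w; simp [List.takeWhile_cons, List.dropWhile_cons, hc]
  | cons z u' ih =>
    intro w
    cases hz : p z with
    | true =>
      simp [List.takeWhile_cons, List.dropWhile_cons, hz, (ih w).1, (ih w).2]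
    | false =>
      simp [List.cons_append, List.takeWhile_cons, List.dropWhile_cons, hz]

lemma takeWhile_dropWhile_all_pos {p : ℕ → Bool} :
    ∀ {b : List ℕ}, (∀ x ∈ b, p x = true) → ∀ {r : List ℕ},
      (r = [] ∨ ∃ y ys, r = y :: ys ∧ p y = false) →
      (b ++ r).takeWhile p = b ∧ (b ++ r).dropWhile p = r := by
  intro b
  induction b with
  | nil =>
    intro _ r hr
    rcases hr with rfl | ⟨y, ys, rfl, hy⟩
    · simp
    · simp [List.takeWhile_cons, List.dropWhile_cons, hy]
  | cons z b' ih =>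
    intro hb r hr
    have hz : p z = true := hb z (List.mem_cons_self)
    have := ih (fun x hx => hb x (List.mem_cons_of_mem _ hx)) hr
    simp [List.takeWhile_cons, List.dropWhile_cons, hz, this.1, this.2]

lemma mem_blocks : ∀ (n : ℕ) (c : List ℕ), c.length ≤ n → ∀ {l : ℕ} {b : List ℕ},
    b ∈ blocks l c → b ≠ [] ∧ ∀ x ∈ b, l < x ∧ x ∈ c := by
  intro n
  induction n with
  | zero =>
    intro c hc l b hb
    have : c = [] := List.length_eq_zero_iff.mp (Nat.le_zero.mp hc)
    subst this; rw [blocks_nil] at hb; simp at hb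
  | succ n ih =>
    intro c hc l b hb
    cases c with
    | nil => rw [blocks_nil] at hb; simp at hb
    | cons x xs =>
      by_cases hx : x ≤ l
      · rw [blocks_cons_le hx] at hb
        obtain ⟨h1, h2⟩ := ih xs (by simpa using Nat.lt_succ_iff.mp (Nat.lt_of_lt_of_le (Nat.lt_succ_of_le le_rfl) hc)) hb
        exact ⟨h1, fun y hy => ⟨(h2 y hy).1, List.mem_cons_of_mem _ (h2 y hy).2⟩⟩
      · rw [blocks_cons_gt (by omega)] at hb
        rcases List.mem_cons.mp hb with h | h
        · subst h
          constructor
          · rw [List.takeWhile_cons, if_pos (by simpa using (by omega : l < x))]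
            simp
          · intro y hy
            refine ⟨by simpa using List.mem_takeWhile_imp hy, ?_⟩
            exact (List.takeWhile_sublist _).mem hy
        · have hlen : ((x :: xs).dropWhile (fun y => decide (l < y))).length ≤ n := by
            have h1 : ((x :: xs).dropWhile (fun y => decide (l < y))).length ≤ xs.length := by
              rw [List.dropWhile_cons]
              simp only [decide_eq_true_eq]
              split
              · exact (List.dropWhile_sublist _).length_le
              · omega
            simp only [List.length_cons] at hc
            omega
          obtain ⟨h1, h2⟩ := ih _ hlen h
          exact ⟨h1, fun y hy => ⟨(h2 y hy).1, (List.dropWhile_sublist _).mem (h2 y hy).2⟩⟩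

lemma blocks_append {l c : ℕ} (hc : c ≤ l) :
    ∀ (n : ℕ) (u : List ℕ), u.length ≤ n → ∀ (w : List ℕ),
      blocks l (u ++ c :: w) = blocks l u ++ blocks l w := by
  intro n
  induction n with
  | zero =>
    intro u hu w
    have : u = [] := List.length_eq_zero_iff.mp (Nat.le_zero.mp hu)
    subst this
    simp [blocks_nil, blocks_cons_le hc]
  | succ n ih =>
    intro u hu w
    cases u with
    | nil => simp [blocks_nil, blocks_cons_le hc]
    | cons x u' =>
      simp only [List.length_cons] at hu
      by_cases hx : x ≤ l
      · rw [List.cons_append, blocks_cons_le hx, blocks_cons_le hx]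
        exact ih u' (by omega) w
      · have hx' : l < x := by omega
        have hpc : decide (l < c) = false := by simp; omega
        have htd := takeWhile_dropWhile_append_neg (p := fun y => decide (l < y)) hpc (x :: u') w
        rw [List.cons_append, blocks_cons_gt hx', blocks_cons_gt hx']
        rw [← List.cons_append, htd.1, htd.2]
        have hlen : ((x :: u').dropWhile (fun y => decide (l < y))).length ≤ n := by
          have h1 : ((x :: u').dropWhile (fun y => decide (l < y))).length ≤ u'.length := by
            rw [List.dropWhile_cons]
            simp only [decide_eq_true_eq]
            split
            · exact (List.dropWhile_sublist _).length_le
            · omega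
          omega
        rw [ih _ hlen w, List.cons_append]

lemma blocks_joinSep {v l : ℕ} (hvl : v ≤ l) :
    ∀ (ts : List (List ℕ)), blocks l (joinSep v ts) = ts.flatMap (blocks l) := by
  intro ts
  induction ts with
  | nil => simp [joinSep, blocks_nil]
  | cons t ts ih =>
    cases ts with
    | nil => simp [joinSep]
    | cons t' ts' =>
      rw [joinSep_cons_cons, blocks_append hvl (t.length) t le_rfl, ih]
      simp

lemma blocks_splitSep {v l : ℕ} (hvl : v ≤ l) (s : List ℕ) :
    blocks l s = (splitSep v s).flatMap (blocks l) := by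
  conv_lhs => rw [← joinSep_splitSep v s]
  exact blocks_joinSep hvl _

lemma blocks_of_all_gt {l : ℕ} {s : List ℕ} (hs : s ≠ []) (h : ∀ x ∈ s, l < x) :
    blocks l s = [s] := by
  cases s with
  | nil => exact absurd rfl hs
  | cons x xs =>
    have htd := takeWhile_dropWhile_all_pos (p := fun y => decide (l < y))
      (b := x :: xs) (by intro y hy; simpa using h y hy) (r := []) (Or.inl rfl)
    simp only [List.append_nil] at htd
    rw [blocks_cons_gt (h x (List.mem_cons_self)), htd.1, htd.2, blocks_nil]
/-! ### stepSimp via Forall₂ -/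

def RRel (l : ℕ) (x y : ℕ) : Prop := y = x ∨ (l < x ∧ y = l + 1)

lemma stepSimp_nil (l : ℕ) : stepSimp l [] = [] := by rw [stepSimp]

lemma stepSimp_cons_le {l x : ℕ} (hx : x ≤ l) (xs : List ℕ) :
    stepSimp l (x :: xs) = x :: stepSimp l xs := by rw [stepSimp, if_pos hx]

lemma stepSimp_cons_gt {l x : ℕ} (hx : l < x) (xs : List ℕ) :
    stepSimp l (x :: xs) =
      (((x :: xs).takeWhile (fun y => decide (l < y))).map
          (fun y =>
            if y = listMin ((x :: xs).takeWhile (fun y => decide (l < y))) then l + 1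
            else y)) ++
        stepSimp l ((x :: xs).dropWhile (fun y => decide (l < y))) := by
  rw [stepSimp, if_neg (by omega)]

lemma dropWhile_length_cons {l x : ℕ} (xs : List ℕ) :
    ((x :: xs).dropWhile (fun y => decide (l < y))).length ≤ xs.length + 1 := by
  rw [List.dropWhile_cons]
  split
  · exact Nat.le_succ_of_le (List.dropWhile_sublist _).length_le
  · simp

lemma dropWhile_length_cons' {l x : ℕ} (hx : l < x) (xs : List ℕ) :
    ((x :: xs).dropWhile (fun y => decide (l < y))).length ≤ xs.length := by
  rw [List.dropWhile_cons, if_pos (by simpa using hx)]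
  exact (List.dropWhile_sublist _).length_le

lemma forall₂_map_self {α : Type*} {S : α → α → Prop} {f : α → α} :
    ∀ {u : List α}, (∀ x ∈ u, S x (f x)) → List.Forall₂ S u (u.map f) := by
  intro u
  induction u with
  | nil => intro _; simp
  | cons x xs ih =>
    intro h
    simp only [List.map_cons]
    exact List.Forall₂.cons (h x (List.mem_cons_self))
      (ih fun y hy => h y (List.mem_cons_of_mem _ hy))

lemma forall₂_mem_right {α β : Type*} {S : α → β → Prop} :
    ∀ {u : List α} {u' : List β}, List.Forall₂ S u u' → ∀ {y : β}, y ∈ u' →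
      ∃ x ∈ u, S x y := by
  intro u u' h
  induction h with
  | nil => intro y hy; simp at hy
  | cons hxy hrest ih =>
    intro y hy
    rcases List.mem_cons.mp hy with h' | h'
    · subst h'; exact ⟨_, List.mem_cons_self, hxy⟩
    · obtain ⟨x, hx, hS⟩ := ih h'
      exact ⟨x, List.mem_cons_of_mem _ hx, hS⟩

lemma forall₂_mem_left {α β : Type*} {S : α → β → Prop} :
    ∀ {u : List α} {u' : List β}, List.Forall₂ S u u' → ∀ {x : α}, x ∈ u →
      ∃ y ∈ u', S x y := by
  intro u u' h
  induction h with
  | nil => intro x hx; simp at hx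
  | cons hxy hrest ih =>
    intro x hx
    rcases List.mem_cons.mp hx with h' | h'
    · subst h'; exact ⟨_, List.mem_cons_self, hxy⟩
    · obtain ⟨y, hy, hS⟩ := ih h'
      exact ⟨y, List.mem_cons_of_mem _ hy, hS⟩

lemma stepSimp_forall₂ (l : ℕ) : ∀ (n : ℕ) (c : List ℕ), c.length ≤ n →
    List.Forall₂ (RRel l) c (stepSimp l c) := by
  intro n
  induction n with
  | zero =>
    intro c hc
    have : c = [] := List.length_eq_zero_iff.mp (Nat.le_zero.mp hc)
    subst this; rw [stepSimp_nil]; exact List.Forall₂.nil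
  | succ n ih =>
    intro c hc
    cases c with
    | nil => rw [stepSimp_nil]; exact List.Forall₂.nil
    | cons x xs =>
      simp only [List.length_cons] at hc
      by_cases hx : x ≤ l
      · rw [stepSimp_cons_le hx]
        exact List.Forall₂.cons (Or.inl rfl) (ih xs (by omega))
      · have hx' : l < x := by omega
        rw [stepSimp_cons_gt hx']
        set tw := (x :: xs).takeWhile (fun y => decide (l < y)) with htw
        set dw := (x :: xs).dropWhile (fun y => decide (l < y)) with hdw
        have hsplit : x :: xs = tw ++ dw := List.takeWhile_append_dropWhile.symm
        rw [hsplit]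
        refine List.rel_append ?_ (ih dw ?_)
        · refine forall₂_map_self ?_
          intro z hz
          by_cases hzm : z = listMin tw
          · exact Or.inr ⟨by simpa using List.mem_takeWhile_imp hz, by rw [if_pos hzm]⟩
          · exact Or.inl (by rw [if_neg hzm])
        · have := dropWhile_length_cons' hx' xs
          rw [← hdw] at this
          omega

lemma stepSimp_bounds {l M : ℕ} {c : List ℕ} (hc : ∀ x ∈ c, 1 ≤ x ∧ x ≤ M) :
    ∀ y ∈ stepSimp l c, 1 ≤ y ∧ y ≤ M := by
  intro y hy
  obtain ⟨x, hx, hR⟩ := forall₂_mem_right (stepSimp_forall₂ l c.length c le_rfl) hy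
  rcases hR with rfl | ⟨hlx, rfl⟩
  · exact hc _ hx
  · have := hc _ hx
    omega
lemma forall₂_takeWhile_dropWhile {S : ℕ → ℕ → Prop} {p : ℕ → Bool}
    (hpq : ∀ x y, S x y → p x = p y) :
    ∀ {u u' : List ℕ}, List.Forall₂ S u u' →
      List.Forall₂ S (u.takeWhile p) (u'.takeWhile p) ∧
      List.Forall₂ S (u.dropWhile p) (u'.dropWhile p) := by
  intro u u' h
  induction h with
  | nil => simp
  | @cons x y xs ys hxy hrest ih =>
    cases hp : p x with
    | true =>
      have hq : p y = true := by rw [← hpq x y hxy]; exact hp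
      rw [List.takeWhile_cons, List.takeWhile_cons, List.dropWhile_cons, List.dropWhile_cons,
        if_pos hp, if_pos hq, if_pos hp, if_pos hq]
      exact ⟨List.Forall₂.cons hxy ih.1, ih.2⟩
    | false =>
      have hq : p y = false := by rw [← hpq x y hxy]; exact hp
      rw [List.takeWhile_cons, List.takeWhile_cons, List.dropWhile_cons, List.dropWhile_cons,
        if_neg (by simp [hp]), if_neg (by simp [hq]), if_neg (by simp [hp]), if_neg (by simp [hq])]
      exact ⟨List.Forall₂.nil, List.Forall₂.cons hxy hrest⟩

lemma forall₂_blocks {l : ℕ} {S : ℕ → ℕ → Prop}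
    (hS : ∀ x y, S x y → ((fun y => decide (l < y)) x = (fun y => decide (l < y)) y)) :
    ∀ (n : ℕ) (c c' : List ℕ), c.length ≤ n → List.Forall₂ S c c' →
      List.Forall₂ (List.Forall₂ S) (blocks l c) (blocks l c') := by
  intro n
  induction n with
  | zero =>
    intro c c' hc h
    have : c = [] := List.length_eq_zero_iff.mp (Nat.le_zero.mp hc)
    subst this
    cases h
    rw [blocks_nil]; exact List.Forall₂.nil
  | succ n ih =>
    intro c c' hc h
    cases h with
    | nil => rw [blocks_nil]; exact List.Forall₂.nil
    | @cons x y xs ys hxy hrest =>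
      simp only [List.length_cons] at hc
      have hp := hS x y hxy
      by_cases hx : x ≤ l
      · have hy : y ≤ l := by
          by_contra hy
          simp only [decide_eq_decide] at hp
          omega
        rw [blocks_cons_le hx, blocks_cons_le hy]
        exact ih xs ys (by omega) hrest
      · have hy : l < y := by
          by_contra hy
          simp only [decide_eq_decide] at hp
          omega
        have hx' : l < x := by omega
        rw [blocks_cons_gt hx', blocks_cons_gt hy]
        have htd := forall₂_takeWhile_dropWhile (p := fun y => decide (l < y))
          (fun a b hab => hS a b hab) (List.Forall₂.cons hxy hrest)
        refine List.Forall₂.cons htd.1 ?_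
        refine ih _ _ ?_ htd.2
        have := dropWhile_length_cons' hx' xs
        omega

lemma listMin_transfer {l l' : ℕ} (hl : l + 1 ≤ l') {b b' : List ℕ}
    (h : List.Forall₂ (RRel l') b b') (hb : b ≠ []) (hmin : listMin b = l + 1) :
    listMin b' = l + 1 := by
  have hmem : l + 1 ∈ b := by
    rw [← hmin]
    cases b with
    | nil => exact absurd rfl hb
    | cons x xs => exact listMin_mem xs x
  obtain ⟨y, hy, hR⟩ := forall₂_mem_left h hmem
  have hy' : y = l + 1 := by
    rcases hR with rfl | ⟨h1, _⟩
    · rfl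
    · omega
  subst hy'
  refine listMin_eq hy ?_
  intro z hz
  obtain ⟨x, hx, hR'⟩ := forall₂_mem_right h hz
  have hxmin : l + 1 ≤ x := by
    rw [← hmin]
    cases b with
    | nil => exact absurd rfl hb
    | cons w ws => exact listMin_le ws w hx
  rcases hR' with rfl | ⟨h1, rfl⟩
  · exact hxmin
  · omega

/-- (D) Preservation: later passes preserve earlier levels' property. -/
lemma blocks_min_preserved {l l' : ℕ} (hl : l + 1 ≤ l') {c : List ℕ}
    (h : ∀ b ∈ blocks l c, listMin b = l + 1) :
    ∀ b' ∈ blocks l (stepSimp l' c), listMin b' = l + 1 := by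
  intro b' hb'
  have hf : List.Forall₂ (RRel l') c (stepSimp l' c) :=
    stepSimp_forall₂ l' c.length c le_rfl
  have hS : ∀ x y, RRel l' x y →
      ((fun y => decide (l < y)) x = (fun y => decide (l < y)) y) := by
    intro x y hxy
    rcases hxy with rfl | ⟨h1, rfl⟩
    · rfl
    · simp only [decide_eq_decide]
      omega
  have hbf := forall₂_blocks hS c.length c (stepSimp l' c) le_rfl hf
  obtain ⟨b, hb, hR⟩ := forall₂_mem_right hbf hb'
  exact listMin_transfer hl hR (mem_blocks c.length c le_rfl hb).1 (h b hb)

lemma listMin_map_min {l : ℕ} {tw : List ℕ} (htw : tw ≠ []) (hall : ∀ x ∈ tw, l < x) :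
    listMin (tw.map (fun y => if y = listMin tw then l + 1 else y)) = l + 1 := by
  have hmem : listMin tw ∈ tw := by
    cases tw with
    | nil => exact absurd rfl htw
    | cons x xs => exact listMin_mem xs x
  have hminb : l + 1 ≤ listMin tw := hall _ hmem
  refine listMin_eq ?_ ?_
  · refine List.mem_map.mpr ⟨listMin tw, hmem, ?_⟩
    rw [if_pos rfl]
  · intro z hz
    obtain ⟨x, hx, rfl⟩ := List.mem_map.mp hz
    by_cases hxm : x = listMin tw
    · rw [if_pos hxm]
    · rw [if_neg hxm]
      have : listMin tw ≤ x := by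
        cases tw with
        | nil => exact absurd rfl htw
        | cons w ws => exact listMin_le ws w hx
      omega

lemma head_dropWhile_false {p : ℕ → Bool} :
    ∀ {c : List ℕ} {y : ℕ} {ys : List ℕ}, c.dropWhile p = y :: ys → p y = false := by
  intro c
  induction c with
  | nil => intro y ys h; simp at h
  | cons z c' ih =>
    intro y ys h
    rw [List.dropWhile_cons] at h
    split at h
    · exact ih h
    · cases h
      simpa using ‹¬ p z = true›

/-- (C) Establishment: after the pass at level `l`, every `l`-block has min `l + 1`. -/
lemma blocks_min_established {l : ℕ} :
    ∀ (n : ℕ) (c : List ℕ), c.length ≤ n →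
      ∀ b ∈ blocks l (stepSimp l c), listMin b = l + 1 := by
  intro n
  induction n with
  | zero =>
    intro c hc b hb
    have : c = [] := List.length_eq_zero_iff.mp (Nat.le_zero.mp hc)
    subst this
    rw [stepSimp_nil, blocks_nil] at hb
    simp at hb
  | succ n ih =>
    intro c hc b hb
    cases c with
    | nil => rw [stepSimp_nil, blocks_nil] at hb; simp at hb
    | cons x xs =>
      simp only [List.length_cons] at hc
      by_cases hx : x ≤ l
      · rw [stepSimp_cons_le hx, blocks_cons_le hx] at hb
        exact ih xs (by omega) b hb
      · have hx' : l < x := by omega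
        rw [stepSimp_cons_gt hx'] at hb
        set tw := (x :: xs).takeWhile (fun y => decide (l < y)) with htw
        set dw := (x :: xs).dropWhile (fun y => decide (l < y)) with hdw
        have htwne : tw ≠ [] := by
          rw [htw, List.takeWhile_cons, if_pos (by simpa using hx')]
          simp
        have htwall : ∀ z ∈ tw, l < z := by
          intro z hz
          simpa using List.mem_takeWhile_imp hz
        set B := tw.map (fun y => if y = listMin tw then l + 1 else y) with hB
        have hBne : B ≠ [] := by
          rw [hB]; simpa using htwne
        have hBall : ∀ z ∈ B, l < z := by
          intro z hz
          obtain ⟨w, hw, rfl⟩ := List.mem_map.mp hz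
          by_cases hwm : w = listMin tw
          · rw [if_pos hwm]; omega
          · rw [if_neg hwm]; exact htwall w hw
        have hrest : stepSimp l dw = [] ∨
            ∃ y ys, stepSimp l dw = y :: ys ∧ y ≤ l := by
          cases hd : dw with
          | nil => left; rw [stepSimp_nil]
          | cons y ys =>
            have hy : y ≤ l := by
              have := head_dropWhile_false (hdw ▸ hd)
              simpa using this
            right
            exact ⟨y, stepSimp l ys, by rw [stepSimp_cons_le hy], hy⟩
        obtain ⟨z, B', hBe⟩ : ∃ z B', B = z :: B' := by
          cases hB2 : B with
          | nil => exact absurd hB2 hBne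
          | cons z B' => exact ⟨z, B', rfl⟩
        have hblocks : blocks l (B ++ stepSimp l dw) = B :: blocks l (stepSimp l dw) := by
          have hrest' : stepSimp l dw = [] ∨
              ∃ y ys, stepSimp l dw = y :: ys ∧ (fun w => decide (l < w)) y = false := by
            rcases hrest with h1 | ⟨y, ys, h1, h2⟩
            · exact Or.inl h1
            · exact Or.inr ⟨y, ys, h1, by simp; omega⟩
          have htd := takeWhile_dropWhile_all_pos (p := fun y => decide (l < y))
            (b := z :: B') (by
              intro w hw
              have hwB : w ∈ B := by rw [hBe]; exact hw
              simpa using hBall w hwB)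
            (r := stepSimp l dw) hrest'
          have hz : l < z := hBall z (by rw [hBe]; exact List.mem_cons_self)
          rw [hBe, List.cons_append, blocks_cons_gt hz, ← List.cons_append, htd.1, htd.2]
        rw [hblocks] at hb
        rcases List.mem_cons.mp hb with h1 | h1
        · subst h1
          exact listMin_map_min htwne htwall
        · refine ih dw ?_ b h1
          have := dropWhile_length_cons' hx' xs
          rw [← hdw] at this
          omega
lemma fold_inv {M : ℕ} {a : List ℕ} (ha : ∀ x ∈ a, 1 ≤ x ∧ x ≤ M) :
    ∀ n : ℕ,
      (∀ x ∈ (List.range n).foldl (fun b l => stepSimp (l + 1) b) a, 1 ≤ x ∧ x ≤ M) ∧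
      (∀ l, 1 ≤ l → l ≤ n →
        ∀ b ∈ blocks l ((List.range n).foldl (fun b l => stepSimp (l + 1) b) a),
          listMin b = l + 1) := by
  intro n
  induction n with
  | zero =>
    refine ⟨by simpa using ha, ?_⟩
    intro l hl hn
    omega
  | succ n ih =>
    rw [List.range_succ, List.foldl_append, List.foldl_cons, List.foldl_nil]
    constructor
    · exact stepSimp_bounds ih.1
    · intro l hl hle b hb
      by_cases hln : l = n + 1
      · subst hln
        exact blocks_min_established _ _ le_rfl b hb
      · exact blocks_min_preserved (by omega) (ih.2 l hl (by omega)) b hb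

/-! ### Simplified helpers -/

lemma simplifiedList_iff : ∀ (L : List PTree), SimplifiedList L ↔ ∀ c ∈ L, c.Simplified := by
  intro L
  induction L with
  | nil => simp [SimplifiedList]
  | cons c cs ih => simp [SimplifiedList, ih]

lemma simplified_node {L : List PTree} (h2 : 2 ≤ L.length) (h : ∀ c ∈ L, c.Simplified) :
    PTree.Simplified (.node L) := by
  cases L with
  | nil => simp at h2
  | cons c cs =>
    cases cs with
    | nil => simp at h2
    | cons c' cs' =>
      rw [PTree.Simplified]
      refine ⟨by simp, h c (List.mem_cons_self), ?_⟩
      rw [simplifiedList_iff]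
      intro d hd
      exact h d (List.mem_cons_of_mem _ hd)

lemma decodeT_simplified : ∀ (n : ℕ) (s : List ℕ) (l : ℕ), listMax s + 1 - l ≤ n →
    (∀ x ∈ s, l < x) →
    (∀ l', l ≤ l' → ∀ b ∈ blocks l' s, listMin b = l' + 1) →
    (decodeT s l).Simplified := by
  intro n
  induction n with
  | zero =>
    intro s l hn h1 h2
    have hs : s = [] := by
      cases s with
      | nil => rfl
      | cons x xs =>
        exfalso
        have hx := h1 x (List.mem_cons_self)
        have hx' : x ≤ listMax (x :: xs) := le_listMax (List.mem_cons_self)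
        omega
    subst hs
    rw [decodeT]
    rw [dif_pos (Or.inl rfl)]
    rw [PTree.Simplified]
    trivial
  | succ n ih =>
    intro s l hn h1 h2
    by_cases hleaf : s = [] ∨ listMax s ≤ l
    · rw [decodeT, dif_pos hleaf, PTree.Simplified]; trivial
    · push_neg at hleaf
      obtain ⟨hne, hmax⟩ := hleaf
      have hb1 : blocks l s = [s] := blocks_of_all_gt hne h1
      have hmin : listMin s = l + 1 := h2 l le_rfl s (by rw [hb1]; simp)
      have hmem : l + 1 ∈ s := by
        rw [← hmin]
        cases s with
        | nil => exact absurd rfl hne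
        | cons x xs => exact listMin_mem xs x
      have hsplit2 : 2 ≤ (splitSep (l + 1) s).length := two_le_splitSep_length hmem
      rw [decodeT, dif_neg (by push_neg; exact ⟨hne, by omega⟩)]
      refine simplified_node (by simpa using hsplit2) ?_
      intro c hc
      obtain ⟨⟨t, ht⟩, -, rfl⟩ := List.mem_map.mp hc
      refine ih t (l + 1) ?_ ?_ ?_
      · have h3 := listMax_le_of_mem_splitSep ht
        omega
      · intro x hx
        have hxs : x ∈ s := mem_of_mem_splitSep ht hx
        have := h1 x hxs
        have hne' : x ≠ l + 1 := fun hcon => not_mem_of_mem_splitSep ht (hcon ▸ hx)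
        omega
      · intro l' hl' b hb
        refine h2 l' (by omega) b ?_
        rw [blocks_splitSep hl' s]
        exact List.mem_flatMap.mpr ⟨t, ht, hb⟩

/-- correctness of the simplification procedure. For every list `a`
of length `L ≥ 1` with entries in `{1,…,M}`, every internal (non-leaf) node of the
canonical decoded forest of the simplified list `simplify M a` has at least two
children: the simplification always produces an organization with no redundant
single-subordinate aggregator nodes. -/
theorem decode_simplify_simplified (M : ℕ) (a : List ℕ) (hlen : 1 ≤ a.length)
    (ha : ∀ x ∈ a, 1 ≤ x ∧ x ≤ M) :
    forestSimplified (decode (simplify M a)) := by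
  obtain ⟨x0, hx0⟩ : ∃ x, x ∈ a := by
    cases a with
    | nil => simp at hlen
    | cons y ys => exact ⟨y, List.mem_cons_self⟩
  have hM : 1 ≤ M := le_trans (ha x0 hx0).1 (ha x0 hx0).2
  have hinv := fold_inv ha (M - 1)
  have e : simplify M a = (List.range (M - 1)).foldl (fun b l => stepSimp (l + 1) b) a := rfl
  rw [← e] at hinv
  set a' := simplify M a with ha'
  have hbounds : ∀ x ∈ a', 1 ≤ x ∧ x ≤ M := hinv.1
  have hblocks : ∀ l, 1 ≤ l → ∀ b ∈ blocks l a', listMin b = l + 1 := by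
    intro l hl b hb
    by_cases hlM : l ≤ M - 1
    · exact hinv.2 l hl hlM b hb
    · exfalso
      obtain ⟨hbne, hball⟩ := mem_blocks a'.length a' le_rfl hb
      cases b with
      | nil => exact hbne rfl
      | cons z zs =>
        have h1 := hball z (List.mem_cons_self)
        have h2 := hbounds z h1.2
        omega
  rw [forestSimplified, decode, simplifiedList_iff]
  intro c hc
  obtain ⟨t, ht, rfl⟩ := List.mem_map.mp hc
  refine decodeT_simplified (listMax t) t 1 (by omega) ?_ ?_
  · intro x hx
    have hxs := mem_of_mem_splitSep ht hx
    have hb1 := (hbounds x hxs).1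
    have hne1 : x ≠ 1 := fun hcon => not_mem_of_mem_splitSep ht (hcon ▸ hx)
    omega
  · intro l' hl' b hb
    refine hblocks l' hl' b ?_
    rw [blocks_splitSep hl' a']
    exact List.mem_flatMap.mpr ⟨t, ht, hb⟩
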